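/- The assignment (w₀,w₁) ↦ w₀∧w₁ on generators descends to a well-defined group homomorphism ν: EP(ℂ) → ℂ∧_ℤℂ; that is, for every (u₀,…,u₄) ∈ liftFT, writing uᵢ = (w₀⁽ⁱ⁾, w₁⁽ⁱ⁾), one has Σᵢ₌₀⁴ (−1)ⁱ w₀⁽ⁱ⁾∧w₁⁽ⁱ⁾ = 0 in ℂ∧_ℤℂ, and the transfer relation is likewise annihilated. -/

import Mathlib

/-!
Formalization of a statement from "Extended Bloch group and the
Cheeger–Chern–Simons class" by W. D. Neumann.
-/

noncomputable section
open scoped Classical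
open Complex

namespace ExtendedBloch

/-- The set `Ĉ ⊆ ℂ × ℂ`: pairs `(w₀, w₁)` with `ε₀ e^{w₀} + ε₁ e^{-w₁} = 1`
for some signs `ε₀, ε₁ ∈ {1, -1}`. -/
def CoverSet : Set (ℂ × ℂ) :=
  {w | ∃ e₀ e₁ : ℂ, (e₀ = 1 ∨ e₀ = -1) ∧ (e₁ = 1 ∨ e₁ = -1) ∧
      e₀ * Complex.exp w.1 + e₁ * Complex.exp (-w.2) = 1}

/-- `Ĉ` as a type, with the subspace topology from `ℂ × ℂ`. -/
abbrev Cover : Type := ↥CoverSet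

/-- The point `(z; p, q) := (Log z + pπi, -Log (1-z) + qπi)`. -/
def ellPair (z : ℂ) (p q : ℤ) : ℂ × ℂ :=
  (Complex.log z + (p : ℂ) * (Real.pi : ℂ) * Complex.I,
   -Complex.log (1 - z) + (q : ℂ) * (Real.pi : ℂ) * Complex.I)

lemma neg_one_zpow_cases (n : ℤ) : (-1 : ℂ) ^ n = 1 ∨ (-1 : ℂ) ^ n = -1 := by
  rcases Int.even_or_odd n with h | h
  · exact Or.inl h.neg_one_zpow
  · exact Or.inr h.neg_one_zpow

lemma exp_log_add_int (z : ℂ) (hz : z ≠ 0) (p : ℤ) :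
    Complex.exp (Complex.log z + (p : ℂ) * (Real.pi : ℂ) * Complex.I) = z * (-1) ^ p := by
  rw [Complex.exp_add, Complex.exp_log hz]
  congr 1
  have h : (p : ℂ) * (Real.pi : ℂ) * Complex.I = (p : ℤ) * ((Real.pi : ℂ) * Complex.I) := by
    ring
  rw [h, Complex.exp_int_mul, Complex.exp_pi_mul_I]

/-- `(z; p, q)` lies in `Ĉ` whenever `z ∈ ℂ ∖ {0, 1}`. -/
lemma ellPair_mem {z : ℂ} (h0 : z ≠ 0) (h1 : z ≠ 1) (p q : ℤ) :
    ellPair z p q ∈ CoverSet := by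
  have h1' : (1 : ℂ) - z ≠ 0 := sub_ne_zero.mpr (Ne.symm h1)
  refine ⟨(-1 : ℂ) ^ (-p), (-1 : ℂ) ^ q, neg_one_zpow_cases _, neg_one_zpow_cases _, ?_⟩
  have e1 : Complex.exp ((ellPair z p q).1) = z * (-1) ^ p := exp_log_add_int z h0 p
  have e2 : Complex.exp (-(ellPair z p q).2) = (1 - z) * (-1) ^ (-q) := by
    have h : -(ellPair z p q).2 =
        Complex.log (1 - z) + ((-q : ℤ) : ℂ) * (Real.pi : ℂ) * Complex.I := by
      simp only [ellPair]; push_cast; ring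
    rw [h]; exact exp_log_add_int _ h1' (-q)
  rw [e1, e2]
  have hne : (-1 : ℂ) ≠ 0 := by norm_num
  have hp : (-1 : ℂ) ^ (-p) * (-1 : ℂ) ^ p = 1 := by
    rw [← zpow_add₀ hne]; simp
  have hq : (-1 : ℂ) ^ q * (-1 : ℂ) ^ (-q) = 1 := by
    rw [← zpow_add₀ hne]; simp
  calc (-1 : ℂ) ^ (-p) * (z * (-1) ^ p) + (-1 : ℂ) ^ q * ((1 - z) * (-1) ^ (-q))
      = z * ((-1 : ℂ) ^ (-p) * (-1 : ℂ) ^ p) + (1 - z) * ((-1 : ℂ) ^ q * (-1 : ℂ) ^ (-q)) := by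
        ring
    _ = 1 := by rw [hp, hq]; ring

/-- The set `FT` of five-tuples entering the five term relation. -/
def FTSet : Set (Fin 5 → ℂ) :=
  {v | ∃ x y : ℂ, (x ≠ 0 ∧ x ≠ 1) ∧ (y ≠ 0 ∧ y ≠ 1) ∧ x ≠ y ∧
      v = ![x, y, y / x, (1 - x⁻¹) / (1 - y⁻¹), (1 - x) / (1 - y)]}

/-- `FT⁺`: tuples in `FT` all of whose coordinates lie in the upper half plane. -/
def FTPlus : Set (Fin 5 → ℂ) := {v | v ∈ FTSet ∧ ∀ i, 0 < (v i).im}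

/-- The covering projection `π : Ĉ → ℂ ∖ {0,1}`; on `Ĉ` it equals `ε₀ e^{w₀}`
(note `(e^{2w₀} - e^{-2w₁} + 1)/2 = ε₀ e^{w₀}` on `Ĉ`). -/
def projC (w : ℂ × ℂ) : ℂ :=
  (Complex.exp (2 * w.1) - Complex.exp (-(2 * w.2)) + 1) / 2

def proj5 (u : Fin 5 → Cover) : Fin 5 → ℂ := fun i => projC (u i : ℂ × ℂ)

/-- The base points `((x₀;0,0), …, (x₄;0,0))` with `(x₀,…,x₄) ∈ FT⁺`. -/
def basePts : Set (Fin 5 → Cover) :=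
  {u | ∃ x ∈ FTPlus, ∀ i, (u i : ℂ × ℂ) = ellPair (x i) 0 0}

/-- `liftFT₀`: the component of the preimage of `FT` in `Ĉ⁵` containing the base points
(these all lie in a single component since `FT⁺` is connected). -/
def liftFT₀ : Set (Fin 5 → Cover) :=
  ⋃ u ∈ basePts, connectedComponentIn (proj5 ⁻¹' FTSet) u

/-- The action of `ℤ × ℤ` on `ℂ × ℂ` by `(w₀, w₁) ↦ (w₀ + pπi, w₁ + qπi)`. -/
def shiftPair (w : ℂ × ℂ) (t : ℤ × ℤ) : ℂ × ℂ :=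
  (w.1 + (t.1 : ℂ) * (Real.pi : ℂ) * Complex.I,
   w.2 + (t.2 : ℂ) * (Real.pi : ℂ) * Complex.I)

/-- The set `V ⊆ (ℤ × ℤ)⁵`. -/
def VSet : Set (Fin 5 → ℤ × ℤ) :=
  {v | ∃ p₀ p₁ q₀ q₁ q₂ : ℤ,
      v = ![(p₀, q₀), (p₁, q₁), (p₁ - p₀, q₂), (p₁ - p₀ + q₁ - q₀, q₂ - q₁),
            (q₁ - q₀, q₂ - q₁ - p₀)]}

/-- `liftFT = liftFT₀ + V`. -/
def liftFT : Set (Fin 5 → Cover) :=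
  {w | ∃ u ∈ liftFT₀, ∃ v ∈ VSet, ∀ i, (w i : ℂ × ℂ) = shiftPair (u i : ℂ × ℂ) (v i)}

/-- Relators of the lifted five term relation. -/
def fiveTermRelSet : Set (FreeAbelianGroup Cover) :=
  {a | ∃ u : Fin 5 → Cover, u ∈ liftFT ∧
      a = ∑ i : Fin 5, ((-1 : ℤ) ^ (i : ℕ)) • FreeAbelianGroup.of (u i)}

/-- Relators of the transfer relation. -/
def transferRelSet : Set (FreeAbelianGroup Cover) :=
  {a | ∃ (z : ℂ) (h0 : z ≠ 0) (h1 : z ≠ 1) (p q p' q' : ℤ),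
      a = FreeAbelianGroup.of (⟨ellPair z p q, ellPair_mem h0 h1 p q⟩ : Cover)
        + FreeAbelianGroup.of (⟨ellPair z p' q', ellPair_mem h0 h1 p' q'⟩ : Cover)
        - FreeAbelianGroup.of (⟨ellPair z p q', ellPair_mem h0 h1 p q'⟩ : Cover)
        - FreeAbelianGroup.of (⟨ellPair z p' q, ellPair_mem h0 h1 p' q⟩ : Cover)}

def epRel : AddSubgroup (FreeAbelianGroup Cover) :=
  AddSubgroup.closure (fiveTermRelSet ∪ transferRelSet)

/-- The extended pre-Bloch group `EP(ℂ)`: the free abelian group on `Ĉ` modulo the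
lifted five term relations and the transfer relations. -/
abbrev EP : Type := FreeAbelianGroup Cover ⧸ epRel

/-- The class of a point of `Ĉ` in `EP(ℂ)`. -/
def epMk (w : Cover) : EP := QuotientAddGroup.mk (FreeAbelianGroup.of w)

/-- The class `[z; p, q] ∈ EP(ℂ)` (junk value `0` if `z ∈ {0, 1}`). -/
def epGen (z : ℂ) (p q : ℤ) : EP :=
  if h : z ≠ 0 ∧ z ≠ 1 then epMk ⟨ellPair z p q, ellPair_mem h.1 h.2 p q⟩ else 0

/-- `χ : ℂ* → EP(ℂ)`, `χ(z) = [z;0,1] - [z;0,0]` (and `χ(1) = 0`). -/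
def chi (z : ℂ) : EP := epGen z 0 1 - epGen z 0 0

/-- The wedge `a ∧ b` in `ℂ ∧_ℤ ℂ`, the second exterior power of `ℂ` as a `ℤ`-module. -/
def wedgeC (a b : ℂ) : ⋀[ℤ]^2 ℂ :=
  ⟨ExteriorAlgebra.ιMulti ℤ 2 ![a, b],
   ExteriorAlgebra.ιMulti_range ℤ 2 (Set.mem_range_self _)⟩


lemma eq_of_exp_eq_of_im_lt {w w' : ℂ} (h : Complex.exp w = Complex.exp w')
    (h2 : |w.im - w'.im| < 2 * Real.pi) : w = w' := by
  rw [Complex.exp_eq_exp_iff_exists_int] at h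
  obtain ⟨n, hn⟩ := h
  have him : w.im = w'.im + n * (2 * Real.pi) := by
    rw [hn]; simp [Complex.add_im, Complex.mul_im]
  have : |(n : ℝ)| * (2 * Real.pi) < 2 * Real.pi := by
    calc |(n : ℝ)| * (2 * Real.pi) = |(n : ℝ) * (2 * Real.pi)| := by
          rw [abs_mul, abs_of_pos (by positivity : (0:ℝ) < 2 * Real.pi)]
      _ = |w.im - w'.im| := by rw [him]; ring_nf
      _ < 2 * Real.pi := h2
  have hn0 : n = 0 := by
    by_contra hne
    have : (1 : ℝ) ≤ |(n : ℝ)| := by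
      rw [← Int.cast_abs]; exact_mod_cast Int.one_le_abs (by omega)
    nlinarith [Real.pi_pos]
  rw [hn, hn0]; simp

lemma arg_pos_of_im_pos {z : ℂ} (h : 0 < z.im) : 0 < z.arg := by
  rcases lt_or_eq_of_le (Complex.arg_nonneg_iff.mpr h.le) with h' | h'
  · exact h'
  · exfalso; have := Complex.arg_eq_zero_iff.mp h'.symm; linarith [this.2]

lemma arg_lt_pi_of_im_pos {z : ℂ} (h : 0 < z.im) : z.arg < Real.pi :=
  Complex.arg_lt_pi_iff.mpr (Or.inr (by linarith [Real.pi_pos]))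

lemma arg_neg_of_im_neg {z : ℂ} (h : z.im < 0) : z.arg < 0 := Complex.arg_neg_iff.mpr h

lemma neg_pi_lt_arg' (z : ℂ) : -Real.pi < z.arg := Complex.arg_mem_Ioc z |>.1

lemma ne_zero_of_im_pos {z : ℂ} (h : 0 < z.im) : z ≠ 0 := by
  intro h0; rw [h0] at h; simp at h
lemma ne_zero_of_im_neg {z : ℂ} (h : z.im < 0) : z ≠ 0 := by
  intro h0; rw [h0] at h; simp at h

lemma im_div_pos_iff {z w : ℂ} (hw : w ≠ 0) :
    0 < (z / w).im ↔ 0 < z.im * w.re - z.re * w.im := by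
  rw [Complex.div_im]
  have h := Complex.normSq_pos.mpr hw
  have e : z.im * w.re / Complex.normSq w - z.re * w.im / Complex.normSq w
      = (z.im * w.re - z.re * w.im) / Complex.normSq w := by ring
  rw [e, div_pos_iff]
  constructor
  · rintro (⟨h1, _⟩ | ⟨_, h2⟩); exact h1; linarith [Real.pi_pos]
  · intro h1; exact Or.inl ⟨h1, h⟩

lemma id1 {x y : ℂ} (hx : 0 < x.im) (hy : 0 < y.im) (h2 : 0 < (y / x).im) : log (y / x) - log y + log x = 0 := by
  have hx0 : x ≠ 0 := ne_zero_of_im_pos hx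
  have hy0 : y ≠ 0 := ne_zero_of_im_pos hy
  apply eq_of_exp_eq_of_im_lt (w' := 0)
  · rw [Complex.exp_add, Complex.exp_sub, Complex.exp_log hx0, Complex.exp_log hy0,
      Complex.exp_log (div_ne_zero hy0 hx0), Complex.exp_zero]
    field_simp
  · simp only [Complex.sub_im, Complex.add_im, Complex.log_im, Complex.zero_im, sub_zero]
    rw [abs_lt]
    constructor
    · have := neg_pi_lt_arg' (y / x); have := arg_pos_of_im_pos hx
      have := arg_lt_pi_of_im_pos hy; linarith [Real.pi_pos]
    · have := Complex.arg_le_pi (y / x); have := arg_lt_pi_of_im_pos hx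
      have := arg_pos_of_im_pos hy; linarith [Real.pi_pos]

lemma id2 {x y : ℂ} (hx : 0 < x.im) (hy : 0 < y.im) :
    log ((1 - x) / (1 - y)) - log (1 - x) + log (1 - y) = 0 := by
  have hx1 : (1 - x).im < 0 := by simp [Complex.sub_im]; linarith [Real.pi_pos]
  have hy1 : (1 - y).im < 0 := by simp [Complex.sub_im]; linarith [Real.pi_pos]
  have hx0 : (1 - x) ≠ 0 := ne_zero_of_im_neg hx1
  have hy0 : (1 - y) ≠ 0 := ne_zero_of_im_neg hy1
  apply eq_of_exp_eq_of_im_lt (w' := 0)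
  · rw [Complex.exp_add, Complex.exp_sub, Complex.exp_log hx0, Complex.exp_log hy0,
      Complex.exp_log (div_ne_zero hx0 hy0), Complex.exp_zero]
    field_simp
  · simp only [Complex.sub_im, Complex.add_im, Complex.log_im, Complex.zero_im, sub_zero]
    rw [abs_lt]
    constructor
    · have := neg_pi_lt_arg' ((1 - x) / (1 - y)); have := arg_neg_of_im_neg hx1
      have := neg_pi_lt_arg' (1 - y); linarith [Real.pi_pos]
    · have := Complex.arg_le_pi ((1 - x) / (1 - y)); have := neg_pi_lt_arg' (1 - x)
      have := arg_neg_of_im_neg hy1; linarith [Real.pi_pos]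

lemma id3 {x2 x3 x4 : ℂ} (h2 : 0 < x2.im) (h3 : 0 < x3.im) (h4 : 0 < x4.im)
    (he : x3 = x2 * x4) : log x3 - log x4 - log x2 = 0 := by
  have h20 : x2 ≠ 0 := ne_zero_of_im_pos h2
  have h30 : x3 ≠ 0 := ne_zero_of_im_pos h3
  have h40 : x4 ≠ 0 := ne_zero_of_im_pos h4
  apply eq_of_exp_eq_of_im_lt (w' := 0)
  · rw [Complex.exp_sub, Complex.exp_sub, Complex.exp_log h30, Complex.exp_log h40,
      Complex.exp_log h20, Complex.exp_zero, he]
    field_simp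
  · simp only [Complex.sub_im, Complex.log_im, Complex.zero_im, sub_zero]
    rw [abs_lt]
    constructor
    · have := arg_pos_of_im_pos h3; have := arg_lt_pi_of_im_pos h4
      have := arg_lt_pi_of_im_pos h2; linarith [Real.pi_pos]
    · have := arg_lt_pi_of_im_pos h3; have := arg_pos_of_im_pos h4
      have := arg_pos_of_im_pos h2; linarith [Real.pi_pos]

lemma id4 {x y : ℂ} (hxy : x ≠ y) (hx : 0 < x.im) (hy : 0 < y.im) (him2 : 0 < (y / x).im)
    (him4 : 0 < ((1 - x) / (1 - y)).im) :
    -log (1 - (1 - x) / (1 - y)) + log (1 - y / x) - log (1 - y) + log x = 0 := by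
  have hx0 : x ≠ 0 := ne_zero_of_im_pos hx
  have hy1 : (1 - y).im < 0 := by simp [Complex.sub_im]; linarith [Real.pi_pos]
  have hy0 : (1 - y) ≠ 0 := ne_zero_of_im_neg hy1
  have h2im : (1 - y / x).im < 0 := by simp [Complex.sub_im]; linarith [Real.pi_pos]
  have h4im : (1 - (1 - x) / (1 - y)).im < 0 := by simp [Complex.sub_im]; linarith [Real.pi_pos]
  have h20 : (1 - y / x) ≠ 0 := ne_zero_of_im_neg h2im
  have h40 : (1 - (1 - x) / (1 - y)) ≠ 0 := ne_zero_of_im_neg h4im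
  have hu : 0 < (x / (1 - y)).im := by
    rw [im_div_pos_iff hy0]
    rw [im_div_pos_iff hx0] at him2
    simp only [Complex.sub_re, Complex.sub_im, Complex.one_re, Complex.one_im]
    nlinarith [Real.pi_pos]
  have hu0 : x / (1 - y) ≠ 0 := ne_zero_of_im_pos hu
  have hA : log (1 - y / x) - log (1 - (1 - x) / (1 - y)) + log (x / (1 - y)) = 0 := by
    apply eq_of_exp_eq_of_im_lt (w' := 0)
    · rw [Complex.exp_add, Complex.exp_sub, Complex.exp_log h20, Complex.exp_log h40,
        Complex.exp_log hu0, Complex.exp_zero]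
      field_simp [sub_ne_zero.mpr hxy]
      ring
    · simp only [Complex.sub_im, Complex.add_im, Complex.log_im, Complex.zero_im, sub_zero]
      rw [abs_lt]
      constructor
      · have := neg_pi_lt_arg' (1 - y / x); have := Complex.arg_le_pi (1 - (1 - x) / (1 - y))
        have := arg_pos_of_im_pos hu; linarith [Real.pi_pos]
      · have := arg_neg_of_im_neg h2im; have := neg_pi_lt_arg' (1 - (1 - x) / (1 - y))
        have := arg_lt_pi_of_im_pos hu; linarith [Real.pi_pos]
  have hB : log (x / (1 - y)) - log x + log (1 - y) = 0 := by
    apply eq_of_exp_eq_of_im_lt (w' := 0)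
    · rw [Complex.exp_add, Complex.exp_sub, Complex.exp_log hx0, Complex.exp_log hy0,
        Complex.exp_log hu0, Complex.exp_zero]
      field_simp
    · simp only [Complex.sub_im, Complex.add_im, Complex.log_im, Complex.zero_im, sub_zero]
      rw [abs_lt]
      constructor
      · have := arg_pos_of_im_pos hu; have := arg_lt_pi_of_im_pos hx
        have := neg_pi_lt_arg' (1 - y); linarith [Real.pi_pos]
      · have := arg_lt_pi_of_im_pos hu; have := arg_pos_of_im_pos hx
        have := arg_neg_of_im_neg hy1; linarith [Real.pi_pos]
  linear_combination hA - hB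

lemma id5 {x y : ℂ} (hxy : x ≠ y) (hx : 0 < x.im) (hy : 0 < y.im) (him2 : 0 < (y / x).im)
    (him3 : 0 < ((1 - x⁻¹) / (1 - y⁻¹)).im) :
    -log (1 - (1 - x⁻¹) / (1 - y⁻¹)) + log (1 - y / x) - log (1 - y) = 0 := by
  have hx0 : x ≠ 0 := ne_zero_of_im_pos hx
  have hy0' : y ≠ 0 := ne_zero_of_im_pos hy
  have hy1 : (1 - y).im < 0 := by simp [Complex.sub_im]; linarith [Real.pi_pos]
  have hy0 : (1 - y) ≠ 0 := ne_zero_of_im_neg hy1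
  have h2im : (1 - y / x).im < 0 := by simp [Complex.sub_im]; linarith [Real.pi_pos]
  have h3im : (1 - (1 - x⁻¹) / (1 - y⁻¹)).im < 0 := by simp [Complex.sub_im]; linarith [Real.pi_pos]
  have h20 : (1 - y / x) ≠ 0 := ne_zero_of_im_neg h2im
  have h30 : (1 - (1 - x⁻¹) / (1 - y⁻¹)) ≠ 0 := ne_zero_of_im_neg h3im
  have hy1' : y ≠ 1 := by intro h; rw [h] at hy; simp at hy
  have hyi : (1 - y⁻¹) ≠ 0 := sub_ne_zero.mpr (fun h => hy1' (inv_eq_one.mp h.symm))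
  have hy10 : y - 1 ≠ 0 := sub_ne_zero.mpr hy1'
  have key : (1 - y / x) = (1 - (1 - x⁻¹) / (1 - y⁻¹)) * (1 - y) := by
    field_simp
    ring
  apply eq_of_exp_eq_of_im_lt (w' := 0)
  · rw [Complex.exp_sub, Complex.exp_add, Complex.exp_neg, Complex.exp_log h30,
      Complex.exp_log h20, Complex.exp_log hy0, Complex.exp_zero, key]
    generalize hgen : (1 - (1 - x⁻¹) / (1 - y⁻¹)) = t at h30 ⊢
    field_simp
  · simp only [Complex.sub_im, Complex.add_im, Complex.neg_im, Complex.log_im,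
      Complex.zero_im, sub_zero]
    rw [abs_lt]
    constructor
    · have := Complex.arg_le_pi (1 - (1 - x⁻¹) / (1 - y⁻¹)); have := neg_pi_lt_arg' (1 - y / x)
      have := arg_neg_of_im_neg hy1; linarith [Real.pi_pos]
    · have := neg_pi_lt_arg' (1 - (1 - x⁻¹) / (1 - y⁻¹)); have := arg_neg_of_im_neg h2im
      have := neg_pi_lt_arg' (1 - y); linarith [Real.pi_pos]

lemma wedgeC_coe (a b : ℂ) : (wedgeC a b : ExteriorAlgebra ℤ ℂ)
    = ExteriorAlgebra.ι ℤ a * ExteriorAlgebra.ι ℤ b := by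
  show ExteriorAlgebra.ιMulti ℤ 2 ![a, b] = _
  rw [ExteriorAlgebra.ιMulti_apply]; simp [List.ofFn_succ]

lemma wedgeC_add_left (a a' b : ℂ) : wedgeC (a + a') b = wedgeC a b + wedgeC a' b := by
  apply Subtype.ext; simp [wedgeC_coe, add_mul]
lemma wedgeC_add_right (a b b' : ℂ) : wedgeC a (b + b') = wedgeC a b + wedgeC a b' := by
  apply Subtype.ext; simp [wedgeC_coe, mul_add]
lemma wedgeC_sub_left (a a' b : ℂ) : wedgeC (a - a') b = wedgeC a b - wedgeC a' b := by
  apply Subtype.ext; simp [wedgeC_coe, sub_mul]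
lemma wedgeC_sub_right (a b b' : ℂ) : wedgeC a (b - b') = wedgeC a b - wedgeC a b' := by
  apply Subtype.ext; simp [wedgeC_coe, mul_sub]
lemma wedgeC_neg_left (a b : ℂ) : wedgeC (-a) b = - wedgeC a b := by
  apply Subtype.ext; simp [wedgeC_coe]
lemma wedgeC_neg_right (a b : ℂ) : wedgeC a (-b) = - wedgeC a b := by
  apply Subtype.ext; simp [wedgeC_coe]
lemma wedgeC_intmul_left (n : ℤ) (a b : ℂ) : wedgeC ((n : ℂ) * a) b = n • wedgeC a b := by
  apply Subtype.ext
  have h : ((n : ℂ) * a) = n • a := by simp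
  rw [Submodule.coe_smul]
  simp only [wedgeC_coe, h, map_zsmul, smul_mul_assoc]
lemma wedgeC_intmul_right (n : ℤ) (a b : ℂ) : wedgeC a ((n : ℂ) * b) = n • wedgeC a b := by
  apply Subtype.ext
  have h : ((n : ℂ) * b) = n • b := by simp
  rw [Submodule.coe_smul]
  simp only [wedgeC_coe, h, map_zsmul, mul_smul_comm]
lemma wedgeC_self (a : ℂ) : wedgeC a a = 0 := by
  apply Subtype.ext; simp [wedgeC_coe, ExteriorAlgebra.ι_sq_zero]
lemma wedgeC_anticomm (a b : ℂ) : wedgeC b a = - wedgeC a b := by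
  apply Subtype.ext
  have h := ExteriorAlgebra.ι_add_mul_swap (R := ℤ) b a
  rw [show ((-wedgeC a b : ⋀[ℤ]^2 ℂ) : ExteriorAlgebra ℤ ℂ) = -(wedgeC a b : ExteriorAlgebra ℤ ℂ) from rfl,
    wedgeC_coe, wedgeC_coe, ← add_eq_zero_iff_eq_neg', add_comm]
  exact h

lemma key_five (a0 a1 b0 b1 b2 c : ℂ) (p0 p1 q0 q1 q2 : ℤ) :
    wedgeC (a0 + (p0 : ℂ) * c) (b0 + (q0 : ℂ) * c)
  - wedgeC (a1 + (p1 : ℂ) * c) (b1 + (q1 : ℂ) * c)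
  + wedgeC (a1 - a0 + ((p1 - p0 : ℤ) : ℂ) * c) (b2 + (q2 : ℂ) * c)
  - wedgeC (a1 - a0 + (b1 - b0) + ((p1 - p0 + q1 - q0 : ℤ) : ℂ) * c)
      (b2 - b1 + ((q2 - q1 : ℤ) : ℂ) * c)
  + wedgeC (b1 - b0 + ((q1 - q0 : ℤ) : ℂ) * c)
      (b2 - b1 - a0 + ((q2 - q1 - p0 : ℤ) : ℂ) * c) = 0 := by
  have h1 : wedgeC b0 a0 = - wedgeC a0 b0 := wedgeC_anticomm _ _
  have h2 : wedgeC b1 a0 = - wedgeC a0 b1 := wedgeC_anticomm _ _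
  have h3 : wedgeC b2 a0 = - wedgeC a0 b2 := wedgeC_anticomm _ _
  have h4 : wedgeC c a0 = - wedgeC a0 c := wedgeC_anticomm _ _
  have h5 : wedgeC c a1 = - wedgeC a1 c := wedgeC_anticomm _ _
  have h6 : wedgeC c b0 = - wedgeC b0 c := wedgeC_anticomm _ _
  have h7 : wedgeC c b1 = - wedgeC b1 c := wedgeC_anticomm _ _
  have h8 : wedgeC c b2 = - wedgeC b2 c := wedgeC_anticomm _ _
  have h9 : wedgeC b1 b0 = - wedgeC b0 b1 := wedgeC_anticomm _ _
  have h10 : wedgeC b2 b0 = - wedgeC b0 b2 := wedgeC_anticomm _ _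
  have h11 : wedgeC b2 b1 = - wedgeC b1 b2 := wedgeC_anticomm _ _
  simp only [wedgeC_add_left, wedgeC_add_right, wedgeC_sub_left, wedgeC_sub_right,
    wedgeC_intmul_left, wedgeC_intmul_right, wedgeC_self,
    h1, h2, h3, h4, h5, h6, h7, h8, h9, h10, h11,
    smul_neg, smul_zero, smul_sub, smul_add]
  module

lemma exp_one_preconnected_subsingleton {S : Set ℂ} (hS : IsPreconnected S)
    (h : ∀ z ∈ S, Complex.exp (2 * z) = 1) : S.Subsingleton := by
  have hform : ∀ z ∈ S, ∃ n : ℤ, z = (n : ℂ) * (Real.pi : ℂ) * Complex.I := by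
    intro z hz
    obtain ⟨n, hn⟩ := Complex.exp_eq_one_iff.mp (h z hz)
    exact ⟨n, by linear_combination hn / 2⟩
  intro z1 h1 z2 h2
  obtain ⟨n1, e1⟩ := hform z1 h1
  obtain ⟨n2, e2⟩ := hform z2 h2
  suffices hn : n1 = n2 by rw [e1, e2, hn]
  have him : ∀ n : ℤ, ((n : ℂ) * (Real.pi : ℂ) * Complex.I).im = n * Real.pi := by
    intro n; simp
  have hT : IsPreconnected (Complex.im '' S) := hS.image _ Complex.continuous_im.continuousOn
  have hOrd := hT.ordConnected
  have hmem : ∀ n m : ℤ, (n : ℝ) * Real.pi ∈ Complex.im '' S → (m : ℝ) * Real.pi ∈ Complex.im '' S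
      → n < m → False := by
    intro n m hn hm hlt
    have hmid : (n : ℝ) * Real.pi + Real.pi / 2 ∈ Set.Icc ((n : ℝ) * Real.pi) ((m : ℝ) * Real.pi) := by
      constructor
      · linarith [Real.pi_pos]
      · have : (n : ℝ) + 1 ≤ m := by exact_mod_cast hlt
        nlinarith [Real.pi_pos]
    have := hOrd.out hn hm hmid
    obtain ⟨z, hzS, hz⟩ := this
    obtain ⟨k, hk⟩ := hform z hzS
    rw [hk, him k] at hz
    have : (2 * k : ℝ) * Real.pi = (2 * n + 1 : ℝ) * Real.pi := by linarith
    have h2 : (2 * k : ℝ) = 2 * n + 1 := by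
      have hpi := Real.pi_ne_zero
      exact mul_right_cancel₀ hpi this
    have : (2 * k : ℤ) = 2 * n + 1 := by exact_mod_cast h2
    omega
  have hn1 : (n1 : ℝ) * Real.pi ∈ Complex.im '' S := ⟨z1, h1, by rw [e1, him]⟩
  have hn2 : (n2 : ℝ) * Real.pi ∈ Complex.im '' S := ⟨z2, h2, by rw [e2, him]⟩
  rcases lt_trichotomy n1 n2 with h | h | h
  · exact absurd (hmem n1 n2 hn1 hn2 h) id
  · exact h
  · exact absurd (hmem n2 n1 hn2 hn1 h) id

lemma eq_on_component {F : Set (Fin 5 → Cover)} {g : (Fin 5 → Cover) → ℂ}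
    (hg : Continuous g) (hval : ∀ v ∈ F, Complex.exp (2 * g v) = 1)
    {b u : Fin 5 → Cover} (hu : u ∈ connectedComponentIn F b) (hb : b ∈ F) :
    g u = g b := by
  have hpre : IsPreconnected (connectedComponentIn F b) :=
    isPreconnected_connectedComponentIn
  have himg : IsPreconnected (g '' connectedComponentIn F b) :=
    hpre.image g hg.continuousOn
  have hsub := exp_one_preconnected_subsingleton himg ?_
  · exact hsub ⟨u, hu, rfl⟩ ⟨b, mem_connectedComponentIn hb, rfl⟩
  · rintro z ⟨w, hw, rfl⟩
    exact hval w (connectedComponentIn_subset F b hw)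

lemma cover_exp {w : ℂ × ℂ} (hw : w ∈ CoverSet) :
    Complex.exp (2 * w.1) = (projC w) ^ 2 ∧
      Complex.exp (-(2 * w.2)) = (1 - projC w) ^ 2 := by
  obtain ⟨e0, e1, he0, he1, h⟩ := hw
  have h0 : e0 ^ 2 = 1 := by rcases he0 with h' | h' <;> rw [h'] <;> ring
  have h1 : e1 ^ 2 = 1 := by rcases he1 with h' | h' <;> rw [h'] <;> ring
  have hA : Complex.exp (2 * w.1) = Complex.exp w.1 ^ 2 := by
    rw [two_mul, Complex.exp_add]; ring
  have hB : Complex.exp (-(2 * w.2)) = Complex.exp (-w.2) ^ 2 := by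
    rw [show -(2 * w.2) = -w.2 + -w.2 by ring, Complex.exp_add]; ring
  have hbb : Complex.exp (-w.2) ^ 2 = (1 - e0 * Complex.exp w.1) ^ 2 := by
    have he : e1 * Complex.exp (-w.2) = 1 - e0 * Complex.exp w.1 := by
      linear_combination h
    calc Complex.exp (-w.2) ^ 2 = (e1 * Complex.exp (-w.2)) ^ 2 := by
          rw [mul_pow, h1, one_mul]
      _ = _ := by rw [he]
  have hzz : Complex.exp w.1 ^ 2 = (e0 * Complex.exp w.1) ^ 2 := by
    rw [mul_pow, h0, one_mul]
  have hz : projC w = e0 * Complex.exp w.1 := by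
    rw [projC, hA, hB, hzz, hbb]; ring
  refine ⟨?_, ?_⟩
  · rw [hA, hz, hzz]
  · rw [hB, hz, hbb]

lemma projC_ellPair00 {z : ℂ} (h0 : z ≠ 0) (h1 : z ≠ 1) :
    projC (ellPair z 0 0) = z := by
  have h1' : (1 : ℂ) - z ≠ 0 := sub_ne_zero.mpr (Ne.symm h1)
  rw [projC, ellPair]
  simp only [Int.cast_zero, zero_mul, add_zero]
  have e1 : Complex.exp (2 * Complex.log z) = z ^ 2 := by
    rw [two_mul, Complex.exp_add, Complex.exp_log h0]; ring
  have e2 : Complex.exp (-(2 * -Complex.log (1 - z))) = (1 - z) ^ 2 := by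
    rw [show -(2 * -Complex.log (1 - z)) = Complex.log (1 - z) + Complex.log (1 - z) by ring,
      Complex.exp_add, Complex.exp_log h1']; ring
  rw [e1, e2]; ring

lemma exp_rels {u : Fin 5 → Cover} (hu : u ∈ proj5 ⁻¹' FTSet) :
    Complex.exp (2 * ((u 2 : ℂ × ℂ).1 - (u 1 : ℂ × ℂ).1 + (u 0 : ℂ × ℂ).1)) = 1 ∧
    Complex.exp (2 * ((u 4 : ℂ × ℂ).1 + (u 0 : ℂ × ℂ).2 - (u 1 : ℂ × ℂ).2)) = 1 ∧
    Complex.exp (2 * ((u 3 : ℂ × ℂ).1 - (u 4 : ℂ × ℂ).1 - (u 2 : ℂ × ℂ).1)) = 1 ∧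
    Complex.exp (2 * ((u 4 : ℂ × ℂ).2 - (u 2 : ℂ × ℂ).2 + (u 1 : ℂ × ℂ).2 + (u 0 : ℂ × ℂ).1)) = 1 ∧
    Complex.exp (2 * ((u 3 : ℂ × ℂ).2 - (u 2 : ℂ × ℂ).2 + (u 1 : ℂ × ℂ).2)) = 1 := by
  obtain ⟨X, Y, ⟨hX0, hX1⟩, ⟨hY0, hY1⟩, hXY, hv⟩ := hu
  have hp : ∀ i, projC (u i : ℂ × ℂ)
      = ![X, Y, Y / X, (1 - X⁻¹) / (1 - Y⁻¹), (1 - X) / (1 - Y)] i := fun i => congrFun hv i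
  have hp0 : projC (u 0 : ℂ × ℂ) = X := hp 0
  have hp1 : projC (u 1 : ℂ × ℂ) = Y := hp 1
  have hp2 : projC (u 2 : ℂ × ℂ) = Y / X := hp 2
  have hp3 : projC (u 3 : ℂ × ℂ) = (1 - X⁻¹) / (1 - Y⁻¹) := hp 3
  have hp4 : projC (u 4 : ℂ × ℂ) = (1 - X) / (1 - Y) := hp 4
  -- nonzero facts
  have h1X : (1 : ℂ) - X ≠ 0 := sub_ne_zero.mpr (Ne.symm hX1)
  have h1Y : (1 : ℂ) - Y ≠ 0 := sub_ne_zero.mpr (Ne.symm hY1)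
  have hX1' : X - 1 ≠ 0 := sub_ne_zero.mpr hX1
  have hY1' : Y - 1 ≠ 0 := sub_ne_zero.mpr hY1
  have hXY' : X - Y ≠ 0 := sub_ne_zero.mpr hXY
  have hYX' : Y - X ≠ 0 := sub_ne_zero.mpr (Ne.symm hXY)
  have h1Xi : (1 : ℂ) - X⁻¹ ≠ 0 := sub_ne_zero.mpr (fun h => hX1 (inv_eq_one.mp h.symm))
  have h1Yi : (1 : ℂ) - Y⁻¹ ≠ 0 := sub_ne_zero.mpr (fun h => hY1 (inv_eq_one.mp h.symm))
  -- clean forms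
  have hz3 : (1 - X⁻¹) / (1 - Y⁻¹) = (Y * (X - 1)) / (X * (Y - 1)) := by
    field_simp <;> ring
  have h1z2 : 1 - Y / X = (X - Y) / X := by field_simp
  have h1z4 : 1 - (1 - X) / (1 - Y) = (X - Y) / (1 - Y) := by field_simp <;> ring
  have h1z3 : 1 - (1 - X⁻¹) / (1 - Y⁻¹) = (Y - X) / (X * (Y - 1)) := by
    field_simp <;> ring
  -- exp identities
  have cov : ∀ i, Complex.exp (2 * (u i : ℂ × ℂ).1) = projC (u i : ℂ × ℂ) ^ 2 ∧
      Complex.exp (-(2 * (u i : ℂ × ℂ).2)) = (1 - projC (u i : ℂ × ℂ)) ^ 2 :=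
    fun i => cover_exp (u i).prop
  have E0 := (cov 0).1; have E1 := (cov 1).1; have E2 := (cov 2).1
  have E3 := (cov 3).1; have E4 := (cov 4).1
  have G : ∀ i, Complex.exp (2 * (u i : ℂ × ℂ).2)
      = ((1 - projC (u i : ℂ × ℂ)) ^ 2)⁻¹ := by
    intro i
    rw [← (cov i).2, ← Complex.exp_neg]
    congr 1; ring
  have G0 := G 0; have G1 := G 1; have G2 := G 2; have G3 := G 3; have G4 := G 4
  rw [hp0] at E0 G0; rw [hp1] at E1 G1; rw [hp2] at E2 G2
  rw [hp3] at E3 G3; rw [hp4] at E4 G4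
  rw [hz3] at E3; rw [h1z2] at G2; rw [h1z3] at G3; rw [h1z4] at G4
  refine ⟨?_, ?_, ?_, ?_, ?_⟩
  · rw [show 2 * ((u 2 : ℂ × ℂ).1 - (u 1 : ℂ × ℂ).1 + (u 0 : ℂ × ℂ).1)
        = 2 * (u 2 : ℂ × ℂ).1 + 2 * (u 0 : ℂ × ℂ).1 + -(2 * (u 1 : ℂ × ℂ).1) by ring,
      Complex.exp_add, Complex.exp_add, Complex.exp_neg, E2, E0, E1]
    field_simp <;> ring
  · rw [show 2 * ((u 4 : ℂ × ℂ).1 + (u 0 : ℂ × ℂ).2 - (u 1 : ℂ × ℂ).2)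
        = 2 * (u 4 : ℂ × ℂ).1 + 2 * (u 0 : ℂ × ℂ).2 + -(2 * (u 1 : ℂ × ℂ).2) by ring,
      Complex.exp_add, Complex.exp_add, Complex.exp_neg, E4, G0, G1]
    field_simp <;> ring
  · rw [show 2 * ((u 3 : ℂ × ℂ).1 - (u 4 : ℂ × ℂ).1 - (u 2 : ℂ × ℂ).1)
        = 2 * (u 3 : ℂ × ℂ).1 + -(2 * (u 4 : ℂ × ℂ).1) + -(2 * (u 2 : ℂ × ℂ).1) by ring,
      Complex.exp_add, Complex.exp_add, Complex.exp_neg, Complex.exp_neg, E3, E4, E2]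
    field_simp <;> ring
  · rw [show 2 * ((u 4 : ℂ × ℂ).2 - (u 2 : ℂ × ℂ).2 + (u 1 : ℂ × ℂ).2 + (u 0 : ℂ × ℂ).1)
        = 2 * (u 4 : ℂ × ℂ).2 + 2 * (u 1 : ℂ × ℂ).2 + 2 * (u 0 : ℂ × ℂ).1
          + -(2 * (u 2 : ℂ × ℂ).2) by ring,
      Complex.exp_add, Complex.exp_add, Complex.exp_add, Complex.exp_neg, G4, G1, G2, E0]
    field_simp <;> ring
  · rw [show 2 * ((u 3 : ℂ × ℂ).2 - (u 2 : ℂ × ℂ).2 + (u 1 : ℂ × ℂ).2)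
        = 2 * (u 3 : ℂ × ℂ).2 + 2 * (u 1 : ℂ × ℂ).2 + -(2 * (u 2 : ℂ × ℂ).2) by ring,
      Complex.exp_add, Complex.exp_add, Complex.exp_neg, G3, G1, G2]
    field_simp <;> ring

lemma ne_one_of_im_pos {z : ℂ} (h : 0 < z.im) : z ≠ 1 := by
  intro h1; rw [h1] at h; simp at h

lemma liftFT0_rels {u : Fin 5 → Cover} (hu : u ∈ liftFT₀) :
    (u 2 : ℂ × ℂ).1 = (u 1 : ℂ × ℂ).1 - (u 0 : ℂ × ℂ).1 ∧
    (u 4 : ℂ × ℂ).1 = (u 1 : ℂ × ℂ).2 - (u 0 : ℂ × ℂ).2 ∧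
    (u 3 : ℂ × ℂ).1 = (u 2 : ℂ × ℂ).1 + (u 4 : ℂ × ℂ).1 ∧
    (u 4 : ℂ × ℂ).2 = (u 2 : ℂ × ℂ).2 - (u 1 : ℂ × ℂ).2 - (u 0 : ℂ × ℂ).1 ∧
    (u 3 : ℂ × ℂ).2 = (u 2 : ℂ × ℂ).2 - (u 1 : ℂ × ℂ).2 := by
  rw [liftFT₀] at hu
  simp only [Set.mem_iUnion] at hu
  obtain ⟨b, ⟨x, hxP, hb⟩, hcc⟩ := hu
  obtain ⟨hxFT, him⟩ := hxP
  obtain ⟨X, Y, ⟨hX0, hX1⟩, ⟨hY0, hY1⟩, hXY, hxeq⟩ := hxFT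
  subst hxeq
  have him0 : 0 < X.im := him 0
  have him1 : 0 < Y.im := him 1
  have him2 : 0 < (Y / X).im := him 2
  have him3 : 0 < ((1 - X⁻¹) / (1 - Y⁻¹)).im := him 3
  have him4 : 0 < ((1 - X) / (1 - Y)).im := him 4
  have h1X : (1 : ℂ) - X ≠ 0 := sub_ne_zero.mpr (Ne.symm hX1)
  have h1Y : (1 : ℂ) - Y ≠ 0 := sub_ne_zero.mpr (Ne.symm hY1)
  have hX1' : X - 1 ≠ 0 := sub_ne_zero.mpr hX1
  have hY1' : Y - 1 ≠ 0 := sub_ne_zero.mpr hY1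
  have h1Xi : (1 : ℂ) - X⁻¹ ≠ 0 := sub_ne_zero.mpr (fun h => hX1 (inv_eq_one.mp h.symm))
  have h1Yi : (1 : ℂ) - Y⁻¹ ≠ 0 := sub_ne_zero.mpr (fun h => hY1 (inv_eq_one.mp h.symm))
  have hbF : b ∈ proj5 ⁻¹' FTSet := by
    have hproj : proj5 b = ![X, Y, Y / X, (1 - X⁻¹) / (1 - Y⁻¹), (1 - X) / (1 - Y)] := by
      funext i
      show projC (b i : ℂ × ℂ) = _
      rw [hb i]
      exact projC_ellPair00 (ne_zero_of_im_pos (him i)) (ne_one_of_im_pos (him i))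
    exact Set.mem_preimage.mpr
      (hproj ▸ ⟨X, Y, ⟨hX0, hX1⟩, ⟨hY0, hY1⟩, hXY, rfl⟩)
  have hbA : ∀ i, (b i : ℂ × ℂ).1
      = Complex.log (![X, Y, Y / X, (1 - X⁻¹) / (1 - Y⁻¹), (1 - X) / (1 - Y)] i) := by
    intro i; rw [hb i]; simp [ellPair]
  have hbB : ∀ i, (b i : ℂ × ℂ).2
      = -Complex.log (1 - ![X, Y, Y / X, (1 - X⁻¹) / (1 - Y⁻¹), (1 - X) / (1 - Y)] i) := by
    intro i; rw [hb i]; simp [ellPair]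
  -- the five constancy results
  have hc1 : Continuous (fun v : Fin 5 → Cover =>
      (v 2 : ℂ × ℂ).1 - (v 1 : ℂ × ℂ).1 + (v 0 : ℂ × ℂ).1) := by fun_prop
  have hc2 : Continuous (fun v : Fin 5 → Cover =>
      (v 4 : ℂ × ℂ).1 + (v 0 : ℂ × ℂ).2 - (v 1 : ℂ × ℂ).2) := by fun_prop
  have hc3 : Continuous (fun v : Fin 5 → Cover =>
      (v 3 : ℂ × ℂ).1 - (v 4 : ℂ × ℂ).1 - (v 2 : ℂ × ℂ).1) := by fun_prop
  have hc4 : Continuous (fun v : Fin 5 → Cover =>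
      (v 4 : ℂ × ℂ).2 - (v 2 : ℂ × ℂ).2 + (v 1 : ℂ × ℂ).2 + (v 0 : ℂ × ℂ).1) := by fun_prop
  have hc5 : Continuous (fun v : Fin 5 → Cover =>
      (v 3 : ℂ × ℂ).2 - (v 2 : ℂ × ℂ).2 + (v 1 : ℂ × ℂ).2) := by fun_prop
  have h1 := eq_on_component hc1 (fun v hv => (exp_rels hv).1) hcc hbF
  have h2 := eq_on_component hc2 (fun v hv => (exp_rels hv).2.1) hcc hbF
  have h3 := eq_on_component hc3 (fun v hv => (exp_rels hv).2.2.1) hcc hbF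
  have h4 := eq_on_component hc4 (fun v hv => (exp_rels hv).2.2.2.1) hcc hbF
  have h5 := eq_on_component hc5 (fun v hv => (exp_rels hv).2.2.2.2) hcc hbF
  rw [hbA 2, hbA 1, hbA 0] at h1
  rw [hbA 4, hbB 0, hbB 1] at h2
  rw [hbA 3, hbA 4, hbA 2] at h3
  rw [hbB 4, hbB 2, hbB 1, hbA 0] at h4
  rw [hbB 3, hbB 2, hbB 1] at h5
  have m0 : (![X, Y, Y / X, (1 - X⁻¹) / (1 - Y⁻¹), (1 - X) / (1 - Y)] : Fin 5 → ℂ) 0 = X := rfl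
  have m1 : (![X, Y, Y / X, (1 - X⁻¹) / (1 - Y⁻¹), (1 - X) / (1 - Y)] : Fin 5 → ℂ) 1 = Y := rfl
  have m2 : (![X, Y, Y / X, (1 - X⁻¹) / (1 - Y⁻¹), (1 - X) / (1 - Y)] : Fin 5 → ℂ) 2 = Y / X := rfl
  have m3 : (![X, Y, Y / X, (1 - X⁻¹) / (1 - Y⁻¹), (1 - X) / (1 - Y)] : Fin 5 → ℂ) 3
      = (1 - X⁻¹) / (1 - Y⁻¹) := rfl
  have m4 : (![X, Y, Y / X, (1 - X⁻¹) / (1 - Y⁻¹), (1 - X) / (1 - Y)] : Fin 5 → ℂ) 4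
      = (1 - X) / (1 - Y) := rfl
  rw [m2, m1, m0] at h1
  rw [m4, m0, m1] at h2
  rw [m3, m4, m2] at h3
  rw [m4, m2, m1, m0] at h4
  rw [m3, m2, m1] at h5
  have base1 : Complex.log (Y / X) - Complex.log Y + Complex.log X = 0 :=
    id1 him0 him1 him2
  have base2 : Complex.log ((1 - X) / (1 - Y)) - Complex.log (1 - X) + Complex.log (1 - Y) = 0 :=
    id2 him0 him1
  have base3 : Complex.log ((1 - X⁻¹) / (1 - Y⁻¹)) - Complex.log ((1 - X) / (1 - Y))
      - Complex.log (Y / X) = 0 := by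
    refine id3 him2 him3 him4 ?_
    field_simp
    ring
  have base4 : -Complex.log (1 - (1 - X) / (1 - Y)) + Complex.log (1 - Y / X)
      - Complex.log (1 - Y) + Complex.log X = 0 := id4 hXY him0 him1 him2 him4
  have base5 : -Complex.log (1 - (1 - X⁻¹) / (1 - Y⁻¹)) + Complex.log (1 - Y / X)
      - Complex.log (1 - Y) = 0 := id5 hXY him0 him1 him2 him3
  refine ⟨by linear_combination h1 + base1, by linear_combination h2 + base2,
    by linear_combination h3 + base3, by linear_combination h4 + base4,
    by linear_combination h5 + base5⟩

lemma key_five' (a0 a1 b0 b1 b2 : ℂ) (p0 p1 q0 q1 q2 : ℤ) :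
    wedgeC (a0 + (p0 : ℂ) * (Real.pi : ℂ) * Complex.I) (b0 + (q0 : ℂ) * (Real.pi : ℂ) * Complex.I)
  - wedgeC (a1 + (p1 : ℂ) * (Real.pi : ℂ) * Complex.I) (b1 + (q1 : ℂ) * (Real.pi : ℂ) * Complex.I)
  + wedgeC (a1 - a0 + ((p1 - p0 : ℤ) : ℂ) * (Real.pi : ℂ) * Complex.I)
      (b2 + (q2 : ℂ) * (Real.pi : ℂ) * Complex.I)
  - wedgeC (a1 - a0 + (b1 - b0) + ((p1 - p0 + q1 - q0 : ℤ) : ℂ) * (Real.pi : ℂ) * Complex.I)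
      (b2 - b1 + ((q2 - q1 : ℤ) : ℂ) * (Real.pi : ℂ) * Complex.I)
  + wedgeC (b1 - b0 + ((q1 - q0 : ℤ) : ℂ) * (Real.pi : ℂ) * Complex.I)
      (b2 - b1 - a0 + ((q2 - q1 - p0 : ℤ) : ℂ) * (Real.pi : ℂ) * Complex.I) = 0 := by
  simp only [mul_assoc]
  exact key_five a0 a1 b0 b1 b2 ((Real.pi : ℂ) * Complex.I) p0 p1 q0 q1 q2

lemma key_transfer (a b : ℂ) (p q p' q' : ℤ) :
    wedgeC (a + (p : ℂ) * (Real.pi : ℂ) * Complex.I) (b + (q : ℂ) * (Real.pi : ℂ) * Complex.I)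
  + wedgeC (a + (p' : ℂ) * (Real.pi : ℂ) * Complex.I) (b + (q' : ℂ) * (Real.pi : ℂ) * Complex.I)
  = wedgeC (a + (p : ℂ) * (Real.pi : ℂ) * Complex.I) (b + (q' : ℂ) * (Real.pi : ℂ) * Complex.I)
  + wedgeC (a + (p' : ℂ) * (Real.pi : ℂ) * Complex.I) (b + (q : ℂ) * (Real.pi : ℂ) * Complex.I) := by
  simp only [mul_assoc]
  generalize (Real.pi : ℂ) * Complex.I = c
  have h1 : wedgeC c a = - wedgeC a c := wedgeC_anticomm _ _
  have h2 : wedgeC c b = - wedgeC b c := wedgeC_anticomm _ _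
  simp only [wedgeC_add_left, wedgeC_add_right, wedgeC_intmul_left, wedgeC_intmul_right,
    wedgeC_self, h1, h2, smul_neg, smul_zero]
  module

lemma part_one : ∀ u : Fin 5 → Cover, u ∈ liftFT →
    ∑ i : Fin 5, ((-1 : ℤ) ^ (i : ℕ)) • wedgeC (u i : ℂ × ℂ).1 (u i : ℂ × ℂ).2 = 0 := by
  intro u hu
  obtain ⟨u₀, hu₀, v, hvV, hshift⟩ := hu
  obtain ⟨r1, r2, r3, r4, r5⟩ := liftFT0_rels hu₀
  obtain ⟨p0, p1, q0, q1, q2, rfl⟩ := hvV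
  have c0a : (u 0 : ℂ × ℂ).1 = (u₀ 0 : ℂ × ℂ).1 + (p0 : ℂ) * (Real.pi : ℂ) * Complex.I := by
    rw [hshift 0]; rfl
  have c0b : (u 0 : ℂ × ℂ).2 = (u₀ 0 : ℂ × ℂ).2 + (q0 : ℂ) * (Real.pi : ℂ) * Complex.I := by
    rw [hshift 0]; rfl
  have c1a : (u 1 : ℂ × ℂ).1 = (u₀ 1 : ℂ × ℂ).1 + (p1 : ℂ) * (Real.pi : ℂ) * Complex.I := by
    rw [hshift 1]; rfl
  have c1b : (u 1 : ℂ × ℂ).2 = (u₀ 1 : ℂ × ℂ).2 + (q1 : ℂ) * (Real.pi : ℂ) * Complex.I := by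
    rw [hshift 1]; rfl
  have c2a : (u 2 : ℂ × ℂ).1 = (u₀ 2 : ℂ × ℂ).1 + ((p1 - p0 : ℤ) : ℂ) * (Real.pi : ℂ) * Complex.I := by
    rw [hshift 2]; rfl
  have c2b : (u 2 : ℂ × ℂ).2 = (u₀ 2 : ℂ × ℂ).2 + ((q2 : ℤ) : ℂ) * (Real.pi : ℂ) * Complex.I := by
    rw [hshift 2]; rfl
  have c3a : (u 3 : ℂ × ℂ).1 = (u₀ 3 : ℂ × ℂ).1
      + ((p1 - p0 + q1 - q0 : ℤ) : ℂ) * (Real.pi : ℂ) * Complex.I := by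
    rw [hshift 3]; rfl
  have c3b : (u 3 : ℂ × ℂ).2 = (u₀ 3 : ℂ × ℂ).2
      + ((q2 - q1 : ℤ) : ℂ) * (Real.pi : ℂ) * Complex.I := by
    rw [hshift 3]; rfl
  have c4a : (u 4 : ℂ × ℂ).1 = (u₀ 4 : ℂ × ℂ).1
      + ((q1 - q0 : ℤ) : ℂ) * (Real.pi : ℂ) * Complex.I := by
    rw [hshift 4]; rfl
  have c4b : (u 4 : ℂ × ℂ).2 = (u₀ 4 : ℂ × ℂ).2
      + ((q2 - q1 - p0 : ℤ) : ℂ) * (Real.pi : ℂ) * Complex.I := by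
    rw [hshift 4]; rfl
  rw [Fin.sum_univ_five]
  have s0 : ((-1 : ℤ) ^ ((0 : Fin 5) : ℕ)) = 1 := rfl
  have s1 : ((-1 : ℤ) ^ ((1 : Fin 5) : ℕ)) = -1 := rfl
  have s2 : ((-1 : ℤ) ^ ((2 : Fin 5) : ℕ)) = 1 := rfl
  have s3 : ((-1 : ℤ) ^ ((3 : Fin 5) : ℕ)) = -1 := rfl
  have s4 : ((-1 : ℤ) ^ ((4 : Fin 5) : ℕ)) = 1 := rfl
  rw [s0, s1, s2, s3, s4]
  simp only [one_smul, neg_smul]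
  rw [c0a, c0b, c1a, c1b, c2a, c2b, c3a, c3b, c4a, c4b, r3, r1, r2, r4, r5]
  have H := key_five' (u₀ 0 : ℂ × ℂ).1 (u₀ 1 : ℂ × ℂ).1 (u₀ 0 : ℂ × ℂ).2 (u₀ 1 : ℂ × ℂ).2
    (u₀ 2 : ℂ × ℂ).2 p0 p1 q0 q1 q2
  rw [sub_eq_add_neg, sub_eq_add_neg] at H
  exact H

lemma part_two : ∀ (z : ℂ), z ≠ 0 → z ≠ 1 → ∀ p q p' q' : ℤ,
    wedgeC (ellPair z p q).1 (ellPair z p q).2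
        + wedgeC (ellPair z p' q').1 (ellPair z p' q').2
      = wedgeC (ellPair z p q').1 (ellPair z p q').2
        + wedgeC (ellPair z p' q).1 (ellPair z p' q).2 := by
  intro z _ _ p q p' q'
  exact key_transfer (Complex.log z) (-Complex.log (1 - z)) p q p' q'

/-- The assignment `(w₀, w₁) ↦ w₀ ∧ w₁` on generators annihilates the
lifted five term relation and the transfer relation, and hence descends to a well-defined
homomorphism `ν : EP(ℂ) → ℂ ∧_ℤ ℂ`. -/
theorem nu_well_defined :
    (∀ u : Fin 5 → Cover, u ∈ liftFT →
      ∑ i : Fin 5, ((-1 : ℤ) ^ (i : ℕ)) • wedgeC (u i : ℂ × ℂ).1 (u i : ℂ × ℂ).2 = 0) ∧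
    (∀ (z : ℂ), z ≠ 0 → z ≠ 1 → ∀ p q p' q' : ℤ,
      wedgeC (ellPair z p q).1 (ellPair z p q).2
          + wedgeC (ellPair z p' q').1 (ellPair z p' q').2
        = wedgeC (ellPair z p q').1 (ellPair z p q').2
          + wedgeC (ellPair z p' q).1 (ellPair z p' q).2) ∧
    ∃ ν : EP →+ ⋀[ℤ]^2 ℂ,
      ∀ w : Cover, ν (epMk w) = wedgeC (w : ℂ × ℂ).1 (w : ℂ × ℂ).2 := by
  refine ⟨part_one, part_two, ?_⟩
  set φ : FreeAbelianGroup Cover →+ ⋀[ℤ]^2 ℂ :=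
    FreeAbelianGroup.lift (fun w : Cover => wedgeC (w : ℂ × ℂ).1 (w : ℂ × ℂ).2) with hφ
  have hker : epRel ≤ φ.ker := by
    rw [epRel]
    rw [AddSubgroup.closure_le]
    rintro a (⟨u, huFT, rfl⟩ | ⟨z, h0, h1, p, q, p', q', rfl⟩)
    · have : φ (∑ i : Fin 5, ((-1 : ℤ) ^ (i : ℕ)) • FreeAbelianGroup.of (u i))
          = ∑ i : Fin 5, ((-1 : ℤ) ^ (i : ℕ)) • wedgeC (u i : ℂ × ℂ).1 (u i : ℂ × ℂ).2 := by
        rw [map_sum]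
        congr 1
        funext i
        rw [map_zsmul, hφ, FreeAbelianGroup.lift_apply_of]
      have h0 := part_one u huFT
      simp only [AddMonoidHom.mem_ker, SetLike.mem_coe]
      rw [this, h0]
    · have hl : ∀ (a b : ℤ), φ (FreeAbelianGroup.of
          (⟨ellPair z a b, ellPair_mem h0 h1 a b⟩ : Cover))
          = wedgeC (ellPair z a b).1 (ellPair z a b).2 := by
        intro a b; rw [hφ, FreeAbelianGroup.lift_apply_of]
      simp only [AddMonoidHom.mem_ker, SetLike.mem_coe, map_sub, map_add, hl]
      have := part_two z h0 h1 p q p' q'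
      rw [this]
      abel
  refine ⟨QuotientAddGroup.lift epRel φ hker, ?_⟩
  intro w
  show φ (FreeAbelianGroup.of w) = _
  rw [hφ, FreeAbelianGroup.lift_apply_of]

end ExtendedBloch
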